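/- arXiv:1905.08155 — 2 statements merged into one kernel-verified Lean document; each statement's English description precedes it below -/
import Mathlib

section
/- Let k ≥ 1 be an integer, b > 0, and let ζ_1,…,ζ_k and d_1,…,d_k be real numbers satisfying the interlacing conditions 0 > ζ_1 > d_1 > ζ_2 > d_2 > ⋯ > ζ_k > d_k. Define r(t) = b ∏_{i=1}^k (t − ζ_i)/(t − d_i) and set d̃_i = 1/d_i for i = 1,…,k. Then there exist real numbers c_0, c_1, …, c_k, all strictly positive, with c_0 = b ∏_{i=1}^k (ζ_i/d_i), such that for every real λ with λ ≠ 0 and λ ≠ d̃_i for all i, one has r(1/λ) = c_0 + ∑_{i=1}^k c_i/(λ − d̃_i). -/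
open Finset

open Polynomial in
lemma pburaPFpoly {k : ℕ} (hk : 1 ≤ k) (a bb : Fin k → ℝ)
    (hbb : Function.Injective bb) :
    (∏ j, (X - C (a j))) =
      (∏ j, (X - C (bb j))) +
        ∑ i, C ((∏ j, (bb i - a j)) / (∏ j ∈ univ.erase i, (bb i - bb j))) *
          ∏ j ∈ univ.erase i, (X - C (bb j)) := by
  set w : Fin k → ℝ :=
    fun i => (∏ j, (bb i - a j)) / (∏ j ∈ univ.erase i, (bb i - bb j)) with hw
  set P : ℝ[X] := ∏ j, (X - C (a j)) with hP
  set Q : ℝ[X] := ∏ j, (X - C (bb j)) with hQ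
  set S : ℝ[X] := ∑ i, C (w i) * ∏ j ∈ univ.erase i, (X - C (bb j)) with hS
  have hPm : P.Monic := monic_prod_of_monic _ _ fun j _ => monic_X_sub_C _
  have hQm : Q.Monic := monic_prod_of_monic _ _ fun j _ => monic_X_sub_C _
  have hPdeg : P.degree = (k : ℕ) := by
    rw [hP, degree_prod]
    simp [degree_X_sub_C]
  have hQdeg : Q.degree = (k : ℕ) := by
    rw [hQ, degree_prod]
    simp [degree_X_sub_C]
  have herased : ∀ i : Fin k, (∏ j ∈ univ.erase i, (X - C (bb j))).degree
      = ((k - 1 : ℕ) : WithBot ℕ) := by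
    intro i
    rw [degree_prod]
    simp [degree_X_sub_C, Finset.card_erase_of_mem]
  have hPQ : (P - Q).degree < (k : ℕ) := by
    rw [← hPdeg]
    exact degree_sub_lt (hPdeg.trans hQdeg.symm) hPm.ne_zero (by rw [hPm.leadingCoeff, hQm.leadingCoeff])
  have hSdeg : S.degree < (k : ℕ) := by
    apply lt_of_le_of_lt (degree_sum_le _ _)
    apply Finset.sup_lt_iff (by exact_mod_cast WithBot.bot_lt_coe k) |>.2
    intro i _
    calc (C (w i) * ∏ j ∈ univ.erase i, (X - C (bb j))).degree
        ≤ (C (w i)).degree + (∏ j ∈ univ.erase i, (X - C (bb j))).degree := degree_mul_le _ _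
      _ ≤ 0 + ((k - 1 : ℕ) : WithBot ℕ) := by
          rw [herased i]
          exact add_le_add degree_C_le le_rfl
      _ < (k : ℕ) := by
          rw [zero_add]
          exact_mod_cast Nat.sub_lt hk one_pos
  have hD : P - Q - S = 0 := by
    apply eq_zero_of_natDegree_lt_card_of_eval_eq_zero _ hbb
    · intro i
      have hQe : Q.eval (bb i) = 0 := by
        rw [hQ, eval_prod]
        exact Finset.prod_eq_zero (mem_univ i) (by simp)
      have hne : (∏ j ∈ univ.erase i, (bb i - bb j)) ≠ 0 := by
        apply Finset.prod_ne_zero_iff.2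
        intro j hj
        exact sub_ne_zero.2 fun h => (Finset.mem_erase.1 hj).1 (hbb h).symm
      have hSe : S.eval (bb i) = ∏ j, (bb i - a j) := by
        rw [hS, eval_finset_sum]
        rw [Finset.sum_eq_single i]
        · simp only [eval_mul, eval_C, eval_prod, eval_sub, eval_X]
          rw [hw]
          exact div_mul_cancel₀ _ hne
        · intro j _ hj
          simp only [eval_mul, eval_C, eval_prod, eval_sub, eval_X]
          exact mul_eq_zero_of_right _
            (Finset.prod_eq_zero (Finset.mem_erase.2 ⟨Ne.symm hj, mem_univ i⟩) (sub_self _))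
        · simp
      have hPe : P.eval (bb i) = ∏ j, (bb i - a j) := by
        rw [hP, eval_prod]; simp
      simp [eval_sub, hPe, hQe, hSe]
    · have : (P - Q - S).degree < (k : ℕ) := by
        calc (P - Q - S).degree ≤ max (P - Q).degree S.degree := degree_sub_le _ _
          _ < (k : ℕ) := max_lt hPQ hSdeg
      have hcard : Fintype.card (Fin k) = k := Fintype.card_fin k
      rw [hcard]
      by_cases h0 : P - Q - S = 0
      · simp [h0]; omega
      · exact (natDegree_lt_iff_degree_lt h0).2 this
  have : P - (Q + S) = 0 := by linear_combination hD
  exact sub_eq_zero.1 this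

open Polynomial in
lemma pburaPF {k : ℕ} (hk : 1 ≤ k) (a bb : Fin k → ℝ)
    (hbb : Function.Injective bb) (lam : ℝ) (hlam : ∀ i, lam ≠ bb i) :
    ∏ i, (lam - a i) / (lam - bb i) =
      1 + ∑ i, ((∏ j, (bb i - a j)) / (∏ j ∈ univ.erase i, (bb i - bb j))) /
        (lam - bb i) := by
  have hne : ∀ i, lam - bb i ≠ 0 := fun i => sub_ne_zero.2 (hlam i)
  have hDne : (∏ j, (lam - bb j)) ≠ 0 := Finset.prod_ne_zero_iff.2 fun j _ => hne j
  have hEne : ∀ i : Fin k, (∏ j ∈ univ.erase i, (lam - bb j)) ≠ 0 :=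
    fun i => Finset.prod_ne_zero_iff.2 fun j _ => hne j
  have E := congrArg (Polynomial.eval lam) (pburaPFpoly hk a bb hbb)
  simp only [Polynomial.eval_prod, Polynomial.eval_add, Polynomial.eval_finset_sum,
    Polynomial.eval_mul, Polynomial.eval_sub, Polynomial.eval_X, Polynomial.eval_C] at E
  rw [Finset.prod_div_distrib, E, add_div, div_self hDne, Finset.sum_div]
  congr 1
  apply Finset.sum_congr rfl
  intro i _
  have hD : (∏ j, (lam - bb j)) = (lam - bb i) * ∏ j ∈ univ.erase i, (lam - bb j) :=
    (Finset.mul_prod_erase _ _ (mem_univ i)).symm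
  rw [hD]
  exact mul_div_mul_right _ _ (hEne i)


/-- Partial fraction decomposition of `r(1/λ)` where `r(t) = b ∏ (t - ζᵢ)/(t - dᵢ)`
with interlacing negative roots `0 > ζ₁ > d₁ > ζ₂ > d₂ > ⋯ > ζ_k > d_k`. -/
theorem stmt0 (k : ℕ) (hk : 1 ≤ k) (b : ℝ) (hb : 0 < b)
    (ζ d : Fin k → ℝ)
    (hζ0 : ζ ⟨0, hk⟩ < 0)
    (hinter1 : ∀ i : Fin k, d i < ζ i)
    (hinter2 : ∀ i : Fin k, ∀ h : (i : ℕ) + 1 < k, ζ ⟨(i : ℕ) + 1, h⟩ < d i) :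
    ∃ c₀ : ℝ, ∃ c : Fin k → ℝ,
      c₀ = b * ∏ i, ζ i / d i ∧
      0 < c₀ ∧ (∀ i, 0 < c i) ∧
      ∀ lam : ℝ, lam ≠ 0 → (∀ i, lam ≠ 1 / d i) →
        b * ∏ i, ((1 / lam - ζ i) / (1 / lam - d i)) =
          c₀ + ∑ i, c i / (lam - 1 / d i) := by
  -- chain of inequalities
  have hchain : ∀ (m : ℕ) (i : Fin k) (h : (i : ℕ) + 1 + m < k),
      ζ ⟨(i : ℕ) + 1 + m, h⟩ < d i := by
    intro m
    induction m with
    | zero => intro i h; exact hinter2 i h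
    | succ m ih =>
      intro i h
      have h' : (i : ℕ) + 1 < k := by omega
      have h2 : ((⟨(i : ℕ) + 1, h'⟩ : Fin k) : ℕ) + 1 + m < k := by simp; omega
      have key := ih ⟨(i : ℕ) + 1, h'⟩ h2
      have e : (⟨((⟨(i : ℕ) + 1, h'⟩ : Fin k) : ℕ) + 1 + m, h2⟩ : Fin k)
          = ⟨(i : ℕ) + 1 + (m + 1), h⟩ := by ext; simp; omega
      rw [e] at key
      exact key.trans ((hinter1 _).trans (hinter2 i h'))
  have hζlt : ∀ i j : Fin k, (i : ℕ) < (j : ℕ) → ζ j < d i := by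
    intro i j hij
    have h : (i : ℕ) + 1 + ((j : ℕ) - (i : ℕ) - 1) < k := by omega
    have e : (⟨(i : ℕ) + 1 + ((j : ℕ) - (i : ℕ) - 1), h⟩ : Fin k) = j := by
      ext; simp; omega
    have := hchain ((j : ℕ) - (i : ℕ) - 1) i h
    rwa [e] at this
  have hζneg : ∀ i, ζ i < 0 := by
    intro i
    rcases Nat.eq_zero_or_pos (i : ℕ) with h | h
    · have : i = ⟨0, hk⟩ := Fin.ext h
      rw [this]; exact hζ0
    · exact lt_trans (lt_trans (hζlt ⟨0, hk⟩ i h) (hinter1 ⟨0, hk⟩)) hζ0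
  have hdneg : ∀ i, d i < 0 := fun i => (hinter1 i).trans (hζneg i)
  have hdne : ∀ i, d i ≠ 0 := fun i => ne_of_lt (hdneg i)
  have hζne : ∀ i, ζ i ≠ 0 := fun i => ne_of_lt (hζneg i)
  -- d strictly decreasing
  have hdlt : ∀ i j : Fin k, (i : ℕ) < (j : ℕ) → d j < d i :=
    fun i j h => lt_trans (hinter1 j) (hζlt i j h)
  set a : Fin k → ℝ := fun i => 1 / ζ i with ha
  set bb : Fin k → ℝ := fun i => 1 / d i with hbbdef
  have hbbmono : ∀ i j : Fin k, (i : ℕ) < (j : ℕ) → bb i < bb j := by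
    intro i j h
    exact one_div_lt_one_div_of_neg_of_lt (hdneg i) (hdlt i j h)
  have hbbinj : Function.Injective bb := by
    intro i j h
    rcases lt_trichotomy (i : ℕ) (j : ℕ) with h' | h' | h'
    · exact absurd h (ne_of_lt (hbbmono i j h'))
    · exact Fin.ext h'
    · exact absurd h.symm (ne_of_lt (hbbmono j i h'))
  -- sign facts
  have hnum : ∀ i j : Fin k, (j : ℕ) ≤ (i : ℕ) → 0 < bb i - a j := by
    intro i j h
    have hdζ : d i < ζ j := by
      rcases Nat.eq_or_lt_of_le h with h' | h'
      · have : j = i := Fin.ext h'; rw [this]; exact hinter1 i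
      · exact lt_trans (hinter1 i) ((hζlt j i h').trans (hinter1 j))
    have := one_div_lt_one_div_of_neg_of_lt (hζneg j) hdζ
    simp only [ha, hbbdef]
    linarith
  have hnum' : ∀ i j : Fin k, (i : ℕ) < (j : ℕ) → bb i - a j < 0 := by
    intro i j h
    have := one_div_lt_one_div_of_neg_of_lt (hdneg i) (hζlt i j h)
    simp only [ha, hbbdef]
    linarith
  have hden : ∀ i j : Fin k, (j : ℕ) < (i : ℕ) → 0 < bb i - bb j :=
    fun i j h => sub_pos.2 (hbbmono j i h)
  have hden' : ∀ i j : Fin k, (i : ℕ) < (j : ℕ) → bb i - bb j < 0 :=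
    fun i j h => sub_neg.2 (hbbmono i j h)
  set w : Fin k → ℝ :=
    fun i => (∏ j, (bb i - a j)) / (∏ j ∈ univ.erase i, (bb i - bb j)) with hw
  have hwpos : ∀ i, 0 < w i := by
    intro i
    have hrw : w i = (bb i - a i) *
        ∏ j ∈ univ.erase i, ((bb i - a j) / (bb i - bb j)) := by
      rw [hw]
      simp only
      rw [← Finset.mul_prod_erase univ (fun j => bb i - a j) (mem_univ i),
        Finset.prod_div_distrib, mul_div_assoc]
    rw [hrw]
    apply mul_pos (hnum i i le_rfl)
    apply Finset.prod_pos
    intro j hj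
    have hji : j ≠ i := (Finset.mem_erase.1 hj).1
    rcases lt_trichotomy (j : ℕ) (i : ℕ) with h' | h' | h'
    · exact div_pos (hnum i j h'.le) (hden i j h')
    · exact absurd (Fin.ext h') hji
    · exact div_pos_of_neg_of_neg (hnum' i j h') (hden' i j h')
  have hc₀pos : 0 < b * ∏ i, ζ i / d i := by
    apply mul_pos hb
    exact Finset.prod_pos fun i _ => div_pos_of_neg_of_neg (hζneg i) (hdneg i)
  refine ⟨b * ∏ i, ζ i / d i, fun i => (b * ∏ j, ζ j / d j) * w i, rfl, hc₀pos,
    fun i => mul_pos hc₀pos (hwpos i), ?_⟩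
  intro lam hlam hne
  have hlam' : ∀ i, lam ≠ bb i := fun i => hne i
  have hfac : ∀ i : Fin k, (1 / lam - ζ i) / (1 / lam - d i) =
      (ζ i / d i) * ((lam - a i) / (lam - bb i)) := by
    intro i
    have h1 : lam - 1 / d i ≠ 0 := sub_ne_zero.2 (hne i)
    have h5 : 1 / lam - d i ≠ 0 := by
      intro h
      have h6 : 1 / lam = d i := by linarith
      exact hne i (by rw [← one_div_one_div lam, h6])
    simp only [ha, hbbdef]
    rw [div_mul_div_comm]
    rw [div_eq_div_iff h5 (by
      exact mul_ne_zero (hdne i) h1)]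
    field_simp
    linear_combination (lam * ζ i - 1) * mul_inv_cancel₀ (hdne i) -
      (lam * d i - 1) * mul_inv_cancel₀ (hζne i)
  calc b * ∏ i, ((1 / lam - ζ i) / (1 / lam - d i))
      = b * ∏ i, ((ζ i / d i) * ((lam - a i) / (lam - bb i))) := by
        rw [Finset.prod_congr rfl fun i _ => hfac i]
    _ = (b * ∏ i, ζ i / d i) * ∏ i, ((lam - a i) / (lam - bb i)) := by
        rw [Finset.prod_mul_distrib]; ring
    _ = (b * ∏ i, ζ i / d i) * (1 + ∑ i, w i / (lam - bb i)) := by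
        rw [pburaPF hk a bb hbbinj lam hlam']
    _ = (b * ∏ i, ζ i / d i) + ∑ i, ((b * ∏ j, ζ j / d j) * w i) / (lam - 1 / d i) := by
        rw [mul_add, mul_one, Finset.mul_sum]
        congr 1
        apply Finset.sum_congr rfl
        intro i _
        rw [mul_div_assoc]
end

section
/- Let à be an N×N real symmetric positive definite matrix with nonpositive off-diagonal entries (Ã_{ij} ≤ 0 for i ≠ j), i.e. a symmetric M-matrix. Let α ∈ (0,1), λ_1 > 0, let c_0, c_1, …, c_k be positive reals and d̃_1, …, d̃_k be negative reals. Then each matrix à − λ_1 d̃_i I is invertible, and for every vector f̃ ∈ ℝ^N with all entries nonnegative, the vector w̃ = λ_1^{−α} ( c_0 f̃ + ∑_{i=1}^k λ_1 c_i (à − λ_1 d̃_i I)^{−1} f̃ ) has all entries nonnegative. -/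
open Matrix Finset

/-- Inverse-positivity of positive definite Z-matrices: if `B` is positive definite with
nonpositive off-diagonal entries, then `B⁻¹ *ᵥ f` is entrywise nonnegative whenever `f` is. -/
lemma inv_mulVec_nonneg {N : ℕ} (B : Matrix (Fin N) (Fin N) ℝ)
    (hPD : B.PosDef) (hoff : ∀ i j : Fin N, i ≠ j → B i j ≤ 0)
    (f : Fin N → ℝ) (hf : ∀ j, 0 ≤ f j) : ∀ j, 0 ≤ (B⁻¹ *ᵥ f) j := by
  have hdet : IsUnit B.det := hPD.det_pos.ne'.isUnit
  set x : Fin N → ℝ := B⁻¹ *ᵥ f with hx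
  have hBx : B *ᵥ x = f := by
    rw [hx, mulVec_mulVec, Matrix.mul_nonsing_inv B hdet, one_mulVec]
  set y : Fin N → ℝ := fun i => max (-(x i)) 0 with hy
  set p : Fin N → ℝ := fun i => max (x i) 0 with hp
  have hy0 : ∀ i, 0 ≤ y i := fun i => le_max_right _ _
  have hp0 : ∀ i, 0 ≤ p i := fun i => le_max_right _ _
  have hxpy : x = p - y := by
    funext i
    simp only [hy, hp, Pi.sub_apply, max_def]
    split_ifs <;> linarith
  have hyp : ∀ i, y i * p i = 0 := by
    intro i
    rcases le_total (x i) 0 with h | h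
    · have hpi : p i = 0 := max_eq_right h
      rw [hpi, mul_zero]
    · have hyi : y i = 0 := max_eq_right (by linarith)
      rw [hyi, zero_mul]
  -- y ⬝ᵥ (B *ᵥ p) ≤ 0
  have h3 : y ⬝ᵥ (B *ᵥ p) ≤ 0 := by
    have hrw : y ⬝ᵥ (B *ᵥ p) = ∑ i, ∑ j, y i * (B i j * p j) := by
      simp only [dotProduct, mulVec, Finset.mul_sum]
    rw [hrw]
    apply Finset.sum_nonpos
    intro i _
    apply Finset.sum_nonpos
    intro j _
    by_cases hij : i = j
    · subst hij
      rw [show y i * (B i i * p i) = B i i * (y i * p i) by ring, hyp i, mul_zero]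
    · have h1 : 0 ≤ y i * p j := mul_nonneg (hy0 i) (hp0 j)
      have h2 : B i j ≤ 0 := hoff i j hij
      nlinarith
  have h2 : 0 ≤ y ⬝ᵥ f := by
    apply Finset.sum_nonneg
    intro i _
    exact mul_nonneg (hy0 i) (hf i)
  have hsplit : y ⬝ᵥ (B *ᵥ x) = y ⬝ᵥ (B *ᵥ p) - y ⬝ᵥ (B *ᵥ y) := by
    rw [hxpy, mulVec_sub, dotProduct_sub]
  have key : y ⬝ᵥ (B *ᵥ y) ≤ 0 := by
    rw [hBx] at hsplit
    linarith
  have hy_zero : y = 0 := by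
    by_contra hne
    have := hPD.dotProduct_mulVec_pos hne
    rw [star_trivial] at this
    linarith
  intro j
  have : y j = 0 := congrFun hy_zero j
  simp only [hy, max_eq_right_iff] at this
  have : max (-(x j)) 0 = 0 := congrFun hy_zero j
  have hle : -(x j) ≤ 0 := by
    by_contra h
    push_neg at h
    rw [max_eq_left h.le] at this
    linarith
  linarith

/-- Positivity preservation of the P-BURA finite difference scheme: if `Ã` is a symmetric
positive definite M-matrix, `c₀, cᵢ > 0`, `d̃ᵢ < 0`, `λ₁ > 0`, then each `Ã - λ₁ d̃ᵢ I` is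
invertible and the P-BURA approximation `w̃` of `Ã^{-α} f̃` has nonnegative entries
whenever `f̃` does. -/
theorem stmt2 (N k : ℕ) (A : Matrix (Fin N) (Fin N) ℝ)
    (hSym : A.IsSymm) (hPD : A.PosDef)
    (hM : ∀ i j : Fin N, i ≠ j → A i j ≤ 0)
    (α : ℝ) (hα : α ∈ Set.Ioo (0 : ℝ) 1)
    (lam1 : ℝ) (hlam1 : 0 < lam1)
    (c₀ : ℝ) (hc₀ : 0 < c₀) (c : Fin k → ℝ) (hc : ∀ i, 0 < c i)
    (d : Fin k → ℝ) (hd : ∀ i, d i < 0) :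
    (∀ i : Fin k, IsUnit (A - (lam1 * d i) • (1 : Matrix (Fin N) (Fin N) ℝ))) ∧
    ∀ f : Fin N → ℝ, (∀ j, 0 ≤ f j) →
      ∀ j : Fin N,
        0 ≤ (lam1 ^ (-α) •
          (c₀ • f + ∑ i : Fin k,
            (lam1 * c i) • ((A - (lam1 * d i) • (1 : Matrix (Fin N) (Fin N) ℝ))⁻¹ *ᵥ f))) j := by
  -- Each shifted matrix is positive definite.
  have hBPD : ∀ i : Fin k,
      (A - (lam1 * d i) • (1 : Matrix (Fin N) (Fin N) ℝ)).PosDef := by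
    intro i
    set s : ℝ := lam1 * d i with hs
    have hsneg : s < 0 := mul_neg_of_pos_of_neg hlam1 (hd i)
    refine Matrix.PosDef.of_dotProduct_mulVec_pos ?_ ?_
    · show (A - s • (1 : Matrix (Fin N) (Fin N) ℝ))ᴴ = _
      simp [conjTranspose_sub, conjTranspose_smul, hPD.1.eq, hSym.eq]
    · intro x hx
      have hA := hPD.dotProduct_mulVec_pos hx
      rw [star_trivial] at hA ⊢
      have hxx : 0 < x ⬝ᵥ x := by
        obtain ⟨i, hi⟩ := Function.ne_iff.mp hx
        show 0 < ∑ j, x j * x j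
        exact Finset.sum_pos' (fun j _ => mul_self_nonneg (x j))
          ⟨i, Finset.mem_univ i, mul_self_pos.mpr hi⟩
      rw [sub_mulVec, dotProduct_sub, smul_mulVec, one_mulVec, dotProduct_smul,
        smul_eq_mul]
      nlinarith
  have hUnit : ∀ i : Fin k,
      IsUnit (A - (lam1 * d i) • (1 : Matrix (Fin N) (Fin N) ℝ)) := by
    intro i
    exact (Matrix.isUnit_iff_isUnit_det _).mpr (hBPD i).det_pos.ne'.isUnit
  refine ⟨hUnit, ?_⟩
  intro f hf j
  have hoff : ∀ i : Fin k, ∀ a b : Fin N, a ≠ b →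
      (A - (lam1 * d i) • (1 : Matrix (Fin N) (Fin N) ℝ)) a b ≤ 0 := by
    intro i a b hab
    simp only [Matrix.sub_apply, Matrix.smul_apply, smul_eq_mul, one_apply_ne hab, mul_zero, sub_zero]
    exact hM a b hab
  have hterm : ∀ i : Fin k,
      0 ≤ ((A - (lam1 * d i) • (1 : Matrix (Fin N) (Fin N) ℝ))⁻¹ *ᵥ f) j :=
    fun i => inv_mulVec_nonneg _ (hBPD i) (hoff i) f hf j
  simp only [Pi.smul_apply, Pi.add_apply, Finset.sum_apply, smul_eq_mul]
  apply mul_nonneg (Real.rpow_nonneg hlam1.le _)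
  apply add_nonneg (mul_nonneg hc₀.le (hf j))
  apply Finset.sum_nonneg
  intro i _
  exact mul_nonneg (mul_nonneg hlam1.le (hc i).le) (hterm i)
end
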